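/- If S is a collection of 0-1 matrices with ex(n, S) ≤ c·n for all n (for a constant c), and every matrix in S contains the 2 × 2 identity matrix or two ones in the same row, then ex_k(m, S) = Θ(m/k): explicitly, ⌊m/k⌋ − 1 ≤ ex_k(m, S) ≤ m·c/(k − c) for all k > c. -/

import Mathlib

/-- `A` contains the 0-1 pattern `P`. -/
def Contains {a b m n : ℕ} (P : Matrix (Fin a) (Fin b) Bool)
    (A : Matrix (Fin m) (Fin n) Bool) : Prop :=
  ∃ (ri : Fin a → Fin m) (ci : Fin b → Fin n),
    StrictMono ri ∧ StrictMono ci ∧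
      ∀ i j, P i j = true → A (ri i) (ci j) = true

/-- A 0-1 pattern of arbitrary dimensions. -/
structure Pat where
  rows : ℕ
  cols : ℕ
  M : Matrix (Fin rows) (Fin cols) Bool

/-- `A` avoids every matrix in the collection `S`. -/
def AvoidsAll {m n : ℕ} (A : Matrix (Fin m) (Fin n) Bool) (S : Set Pat) : Prop :=
  ∀ P ∈ S, ¬ Contains P.M A

/-- Total number of ones in `A`. -/
def onesCount {m n : ℕ} (A : Matrix (Fin m) (Fin n) Bool) : ℕ :=
  (Finset.univ.filter fun p : Fin m × Fin n => A p.1 p.2 = true).card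

/-- Number of ones in column `j` of `A`. -/
def colOnes {m n : ℕ} (A : Matrix (Fin m) (Fin n) Bool) (j : Fin n) : ℕ :=
  (Finset.univ.filter fun i : Fin m => A i j = true).card

/-- `ex(n, S) = ex(n, n, S)`: maximum number of ones in an `n × n` matrix avoiding `S`. -/
noncomputable def exWeightSq (n : ℕ) (S : Set Pat) : ℕ :=
  sSup {w : ℕ | ∃ A : Matrix (Fin n) (Fin n) Bool, AvoidsAll A S ∧ onesCount A = w}

/-- `ex_k(m, S)` as a supremum in `ℕ∞`. -/
noncomputable def exColsS (k m : ℕ) (S : Set Pat) : ℕ∞ :=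
  sSup {x : ℕ∞ | ∃ n : ℕ, x = (n : ℕ∞) ∧ ∃ A : Matrix (Fin m) (Fin n) Bool,
    AvoidsAll A S ∧ ∀ j, k ≤ colOnes A j}

/-- The `2 × 2` identity pattern. -/
def I2 : Matrix (Fin 2) (Fin 2) Bool := !![true, false; false, true]

section Aux

open Finset

lemma contains_trans' {a b p q m n : ℕ} {P : Matrix (Fin a) (Fin b) Bool}
    {Q : Matrix (Fin p) (Fin q) Bool} {A : Matrix (Fin m) (Fin n) Bool}
    (h1 : Contains P Q) (h2 : Contains Q A) : Contains P A := by
  obtain ⟨r1, c1, hr1, hc1, hm1⟩ := h1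
  obtain ⟨r2, c2, hr2, hc2, hm2⟩ := h2
  exact ⟨r2 ∘ r1, c2 ∘ c1, hr2.comp hr1, hc2.comp hc1,
    fun i j hij => hm2 _ _ (hm1 i j hij)⟩

lemma avoidsAll_submatrix {m n m' n' : ℕ} {S : Set Pat}
    {A : Matrix (Fin m) (Fin n) Bool}
    {f : Fin m' → Fin m} {g : Fin n' → Fin n} (hf : StrictMono f) (hg : StrictMono g)
    (hA : AvoidsAll A S) : AvoidsAll (A.submatrix f g) S := by
  intro P hP hc
  obtain ⟨ri, ci, h1, h2, h3⟩ := hc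
  exact hA P hP ⟨f ∘ ri, g ∘ ci, hf.comp h1, hg.comp h2, fun i j hij => h3 i j hij⟩

lemma onesCount_eq_sum {m n : ℕ} (A : Matrix (Fin m) (Fin n) Bool) :
    onesCount A = ∑ i, ∑ j, (if A i j = true then 1 else 0) := by
  rw [onesCount, Finset.card_filter, ← Finset.univ_product_univ, Finset.sum_product]

lemma onesCount_eq_sum' {m n : ℕ} (A : Matrix (Fin m) (Fin n) Bool) :
    onesCount A = ∑ j, ∑ i, (if A i j = true then 1 else 0) := by
  rw [onesCount, Finset.card_filter, ← Finset.univ_product_univ, Finset.sum_product_right]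

lemma colOnes_eq_sum {m n : ℕ} (A : Matrix (Fin m) (Fin n) Bool) (j : Fin n) :
    colOnes A j = ∑ i, (if A i j = true then 1 else 0) := by
  rw [colOnes, Finset.card_filter]

lemma sum_split {m n : ℕ} (h : n ≤ m) (r : Fin m → ℕ) :
    ∑ i, r i = (∑ i : Fin n, r (Fin.castLE h i)) +
      ∑ i : Fin (m - n), r ⟨n + i.val, by omega⟩ := by
  have hm : n + (m - n) = m := by omega
  rw [← Fin.sum_congr' r hm, Fin.sum_univ_add]
  congr 1

lemma onesCount_sq_le {n : ℕ} {S : Set Pat} {c : ℕ} (hlin : ∀ n, exWeightSq n S ≤ c * n)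
    (A : Matrix (Fin n) (Fin n) Bool) (hA : AvoidsAll A S) : onesCount A ≤ c * n := by
  have hbdd : BddAbove {w : ℕ | ∃ A : Matrix (Fin n) (Fin n) Bool,
      AvoidsAll A S ∧ onesCount A = w} := by
    refine ⟨n * n, ?_⟩
    rintro w ⟨B, _, rfl⟩
    calc onesCount B ≤ (Finset.univ : Finset (Fin n × Fin n)).card := Finset.card_filter_le _ _
      _ = n * n := by simp
  exact le_trans (le_csSup hbdd ⟨A, hA, rfl⟩) (hlin n)

lemma ones_le_main {S : Set Pat} {c : ℕ} (hlin : ∀ n, exWeightSq n S ≤ c * n) :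
    ∀ N m n, m + n ≤ N → ∀ A : Matrix (Fin m) (Fin n) Bool,
      AvoidsAll A S → onesCount A ≤ c * m + c * n := by
  intro N
  induction N with
  | zero =>
    intro m n hmn A _
    have hm : m = 0 := by omega
    subst hm
    simp [onesCount_eq_sum]
  | succ N ih =>
    intro m n hmn A hA
    rcases Nat.eq_zero_or_pos m with hm0 | hm0
    · subst hm0; simp [onesCount_eq_sum]
    rcases Nat.eq_zero_or_pos n with hn0 | hn0
    · subst hn0; simp [onesCount_eq_sum]
    rcases lt_trichotomy m n with h | h | h
    · -- m < n : split columns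
      have hmn' : m ≤ n := h.le
      set L : Matrix (Fin m) (Fin m) Bool := A.submatrix id (Fin.castLE hmn') with hL
      set R : Matrix (Fin m) (Fin (n - m)) Bool :=
        A.submatrix id (fun j : Fin (n - m) => ⟨m + j.val, by omega⟩) with hR
      have hLa : AvoidsAll L S :=
        avoidsAll_submatrix strictMono_id (Fin.strictMono_castLE hmn') hA
      have hRa : AvoidsAll R S :=
        avoidsAll_submatrix strictMono_id
          (fun a b hab => Fin.mk_lt_mk.mpr (Nat.add_lt_add_left hab m)) hA
      have hsplit : onesCount A = onesCount L + onesCount R := by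
        rw [onesCount_eq_sum' A, onesCount_eq_sum' L, onesCount_eq_sum' R,
          sum_split hmn' (fun j => ∑ i, (if A i j = true then 1 else 0))]
        rfl
      have h1 : onesCount L ≤ c * m := onesCount_sq_le hlin L hLa
      have h2 : onesCount R ≤ c * m + c * (n - m) := ih m (n - m) (by omega) R hRa
      have hcm : c * m + c * (n - m) = c * n := by
        rw [← Nat.mul_add]; congr 1; omega
      omega
    · subst h
      have := onesCount_sq_le hlin A hA
      omega
    · -- n < m : split rows
      have hnm' : n ≤ m := h.le
      set T : Matrix (Fin n) (Fin n) Bool := A.submatrix (Fin.castLE hnm') id with hT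
      set B : Matrix (Fin (m - n)) (Fin n) Bool :=
        A.submatrix (fun i : Fin (m - n) => ⟨n + i.val, by omega⟩) id with hB
      have hTa : AvoidsAll T S :=
        avoidsAll_submatrix (Fin.strictMono_castLE hnm') strictMono_id hA
      have hBa : AvoidsAll B S :=
        avoidsAll_submatrix
          (fun a b hab => Fin.mk_lt_mk.mpr (Nat.add_lt_add_left hab n))
          strictMono_id hA
      have hsplit : onesCount A = onesCount T + onesCount B := by
        rw [onesCount_eq_sum A, onesCount_eq_sum T, onesCount_eq_sum B,
          sum_split hnm' (fun i => ∑ j, (if A i j = true then 1 else 0))]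
        rfl
      have h1 : onesCount T ≤ c * n := onesCount_sq_le hlin T hTa
      have h2 : onesCount B ≤ c * (m - n) + c * n := ih (m - n) n (by omega) B hBa
      have hcm : c * n + c * (m - n) = c * m := by
        rw [← Nat.mul_add]; congr 1; omega
      omega

end Aux

/-- If `ex(n, S) ≤ c·n` for all `n` and every matrix in `S` contains the `2 × 2`
identity or two ones in a common row, then `ex_k(m, S) = Θ(m/k)`: explicitly,
`⌊m/k⌋ - 1 ≤ ex_k(m, S)` and `(k - c)·ex_k(m, S) ≤ m·c` for all `k > c`. -/
theorem stmt_6 (S : Set Pat) (c : ℕ)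
    (hlin : ∀ n, exWeightSq n S ≤ c * n)
    (hS : ∀ P ∈ S, Contains I2 P.M ∨
      ∃ (i : Fin P.rows) (j j' : Fin P.cols), j ≠ j' ∧ P.M i j = true ∧ P.M i j' = true) :
    ∀ k, c < k → ∀ m,
      ((m / k - 1 : ℕ) : ℕ∞) ≤ exColsS k m S ∧
        ((k - c : ℕ) : ℕ∞) * exColsS k m S ≤ ((m * c : ℕ) : ℕ∞) := by
  intro k hk m
  have hk0 : 0 < k := by omega
  constructor
  · -- lower bound
    set n := m / k with hn
    set A : Matrix (Fin m) (Fin n) Bool :=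
      fun i j => decide (i.val / k + j.val + 1 = n) with hAdef
    have hrow : ∀ (i : Fin m) (j j' : Fin n),
        A i j = true → A i j' = true → j = j' := by
      intro i j j' hj hj'
      rw [hAdef] at hj hj'
      simp only [decide_eq_true_eq] at hj hj'
      exact Fin.ext (by omega)
    have hI2 : ¬ Contains I2 A := by
      rintro ⟨ri, ci, hri, hci, hmem⟩
      have h00 : A (ri 0) (ci 0) = true := hmem 0 0 (by decide)
      have h11 : A (ri 1) (ci 1) = true := hmem 1 1 (by decide)
      rw [hAdef] at h00 h11
      simp only [decide_eq_true_eq] at h00 h11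
      have hr : (ri 0 : ℕ) < (ri 1 : ℕ) := hri (by decide)
      have hc : (ci 0 : ℕ) < (ci 1 : ℕ) := hci (by decide)
      have hd : (ri 0 : ℕ) / k ≤ (ri 1 : ℕ) / k := Nat.div_le_div_right hr.le
      omega
    have hav : AvoidsAll A S := by
      intro P hP hc
      rcases hS P hP with hI | ⟨i, j, j', hjj, hj, hj'⟩
      · exact hI2 (contains_trans' hI hc)
      · obtain ⟨ri, ci, hri, hci, hmem⟩ := hc
        exact hjj (hci.injective (hrow (ri i) (ci j) (ci j') (hmem i j hj) (hmem i j' hj')))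
    have hcols : ∀ j : Fin n, k ≤ colOnes A j := by
      intro j
      have hjn : j.val < n := j.isLt
      have hnk : n * k ≤ m := Nat.div_mul_le_self m k
      have hcard : k ≤ colOnes A j := by
        rw [colOnes]
        have := Finset.card_le_card_of_injOn
          (f := fun x : Fin k => (⟨(n - 1 - j.val) * k + x.val, by
            have h5 : (n - 1 - j.val) * k + k ≤ n * k := by
              rw [← Nat.succ_mul]
              exact Nat.mul_le_mul_right _ (by omega)
            have h6 := x.isLt
            omega⟩ : Fin m))
          (s := Finset.univ) (t := Finset.univ.filter fun i : Fin m => A i j = true)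
          ?_ ?_
        · simpa using this
        · intro x _
          simp only [Finset.mem_coe, Finset.mem_filter, Finset.mem_univ, true_and, hAdef]
          rw [decide_eq_true_eq]
          have h1 : ((n - 1 - j.val) * k + x.val) / k = (n - 1 - j.val) := by
            rw [Nat.add_comm, Nat.add_mul_div_right _ _ hk0, Nat.div_eq_of_lt x.isLt]
            omega
          rw [h1]; omega
        · intro x _ y _ hxy
          have := congrArg Fin.val hxy
          simp only at this
          exact Fin.ext (by omega)
      exact hcard
    have hmem : ((n : ℕ) : ℕ∞) ∈ {x : ℕ∞ | ∃ n' : ℕ, x = (n' : ℕ∞) ∧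
        ∃ A : Matrix (Fin m) (Fin n') Bool, AvoidsAll A S ∧ ∀ j, k ≤ colOnes A j} :=
      ⟨n, rfl, A, hav, hcols⟩
    calc ((m / k - 1 : ℕ) : ℕ∞) ≤ ((n : ℕ) : ℕ∞) := by
          rw [hn]; exact_mod_cast Nat.sub_le _ _
      _ ≤ exColsS k m S := le_sSup hmem
  · -- upper bound
    set b := m * c / (k - c) with hb
    have key : ∀ n : ℕ, ∀ A : Matrix (Fin m) (Fin n) Bool,
        AvoidsAll A S → (∀ j, k ≤ colOnes A j) → n ≤ b := by
      intro n A hA hcol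
      have h1 : k * n ≤ onesCount A := by
        rw [onesCount_eq_sum']
        calc k * n = ∑ _j : Fin n, k := by simp [Finset.sum_const, Nat.mul_comm]
          _ ≤ ∑ j, ∑ i, (if A i j = true then 1 else 0) := by
              apply Finset.sum_le_sum
              intro j _
              rw [← colOnes_eq_sum]
              exact hcol j
      have h2 : onesCount A ≤ c * m + c * n :=
        ones_le_main hlin (m + n) m n le_rfl A hA
      have h3 : (k - c) * n ≤ m * c := by
        rw [Nat.sub_mul]
        have : c * m = m * c := Nat.mul_comm _ _
        omega
      rw [hb, Nat.le_div_iff_mul_le (by omega : 0 < k - c), Nat.mul_comm]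
      exact h3
    have hsup : exColsS k m S ≤ (b : ℕ∞) := by
      apply sSup_le
      rintro x ⟨n, rfl, A, hA, hcol⟩
      exact_mod_cast key n A hA hcol
    calc ((k - c : ℕ) : ℕ∞) * exColsS k m S ≤ ((k - c : ℕ) : ℕ∞) * (b : ℕ∞) :=
          by gcongr
      _ = (((k - c) * b : ℕ) : ℕ∞) := by push_cast; ring
      _ ≤ ((m * c : ℕ) : ℕ∞) := by
          have : (k - c) * b ≤ m * c := by
            rw [hb, Nat.mul_comm]
            exact Nat.div_mul_le_self _ _
          exact_mod_cast this
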